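/- Fix a real number a and for each T > 0 with a·T < 1 let k^u(T) denote the unique k > |a| satisfying T·√(k² − a²) = arccos(a/k). Then the function T ↦ k^u(T) is strictly decreasing and convex on its domain (i.e., on (0, 1/a) if a > 0, and on (0, ∞) if a ≤ 0). -/

import Mathlib

open Real

-- key trig inequality
lemma keyineq (t : ℝ) (h0 : 0 ≤ t) (hπ : t ≤ π) :
    Real.cos t * Real.sin t * (3 + Real.sin t ^ 2) ≤ t * (2 + Real.cos t ^ 2) := by
  set h : ℝ → ℝ := fun t => t * (2 + Real.cos t ^ 2) - Real.cos t * Real.sin t * (3 + Real.sin t ^ 2) with hh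
  have hder : ∀ t : ℝ, HasDerivAt h (2 * Real.sin t * (Real.sin t * (3 - 2 * Real.cos t ^ 2) - t * Real.cos t)) t := by
    intro t
    have h1 : HasDerivAt (fun t : ℝ => t * (2 + Real.cos t ^ 2))
        (1 * (2 + Real.cos t ^ 2) + t * (2 * Real.cos t ^ 1 * (-Real.sin t))) t :=
      (hasDerivAt_id t).mul (((Real.hasDerivAt_cos t).pow 2).const_add 2)
    have h2 : HasDerivAt (fun t : ℝ => Real.cos t * Real.sin t * (3 + Real.sin t ^ 2))
        (((-Real.sin t) * Real.sin t + Real.cos t * Real.cos t) * (3 + Real.sin t ^ 2)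
          + Real.cos t * Real.sin t * (2 * Real.sin t ^ 1 * Real.cos t)) t :=
      ((Real.hasDerivAt_cos t).mul (Real.hasDerivAt_sin t)).mul
        (((Real.hasDerivAt_sin t).pow 2).const_add 3)
    have := h1.sub h2
    refine this.congr_deriv ?_
    have hpy := Real.sin_sq_add_cos_sq t
    nlinarith [hpy]
  have hmono : MonotoneOn h (Set.Icc 0 π) := by
    apply monotoneOn_of_hasDerivWithinAt_nonneg (convex_Icc 0 π)
      (fun x _ => (hder x).continuousAt.continuousWithinAt)
      (fun x _ => (hder x).hasDerivWithinAt)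
    intro x hx
    rw [interior_Icc] at hx
    obtain ⟨hx0, hxπ⟩ := hx
    have hs : 0 < Real.sin x := Real.sin_pos_of_pos_of_lt_pi hx0 hxπ
    have hc1 : Real.cos x ^ 2 ≤ 1 := by nlinarith [Real.sin_sq_add_cos_sq x, sq_nonneg (Real.sin x)]
    rcases le_or_gt (Real.cos x) 0 with hc | hc
    · nlinarith [mul_nonneg (mul_nonneg hs.le hs.le) (by nlinarith : (0:ℝ) ≤ 1 - Real.cos x ^ 2),
        mul_nonneg (mul_nonneg hs.le hx0.le) (neg_nonneg.2 hc)]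
    · have hxlt : x < π / 2 := by
        by_contra hge
        push_neg at hge
        exact absurd (Real.cos_nonpos_of_pi_div_two_le_of_le hge (by linarith [Real.pi_pos])) (not_le.mpr hc)
      have htan := Real.lt_tan hx0 hxlt
      rw [Real.tan_eq_sin_div_cos, lt_div_iff₀ hc] at htan
      nlinarith [mul_nonneg (mul_nonneg hs.le hs.le) (by nlinarith : (0:ℝ) ≤ 2 - 2 * Real.cos x ^ 2),
        mul_pos hs (sub_pos.2 htan)]
  have h0' : h 0 = 0 := by simp [hh]
  have := hmono (Set.mem_Icc.mpr ⟨le_refl 0, Real.pi_pos.le⟩) (Set.mem_Icc.mpr ⟨h0, hπ⟩) h0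
  rw [h0'] at this
  simp only [hh] at this
  linarith

lemma cossinlt (t : ℝ) (h0 : 0 < t) (hπ : t ≤ π) : Real.cos t * Real.sin t < t := by
  have hs : 0 ≤ Real.sin t := Real.sin_nonneg_of_nonneg_of_le_pi h0.le hπ
  have hc : Real.cos t ≤ 1 := Real.cos_le_one t
  have := Real.sin_lt h0
  nlinarith

section
variable (a k : ℝ)

lemma hk0 (ha : |a| < k) : 0 < k := lt_of_le_of_lt (abs_nonneg a) ha
lemma hsq2 (ha : |a| < k) : 0 < k ^ 2 - a ^ 2 := by
  have := hk0 a k ha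
  nlinarith [abs_nonneg a, sq_abs a, ha]
lemma hs0 (ha : |a| < k) : 0 < Real.sqrt (k ^ 2 - a ^ 2) := Real.sqrt_pos.2 (hsq2 a k ha)
lemma hratio (ha : |a| < k) : |a / k| < 1 := by
  rw [abs_div, abs_of_pos (hk0 a k ha), div_lt_one (hk0 a k ha)]; exact ha
lemma hsqrt_ratio (ha : |a| < k) :
    Real.sqrt (1 - (a / k) ^ 2) = Real.sqrt (k ^ 2 - a ^ 2) / k := by
  have hk := hk0 a k ha
  rw [show 1 - (a / k) ^ 2 = (k ^ 2 - a ^ 2) / k ^ 2 by field_simp,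
    Real.sqrt_div (hsq2 a k ha).le, Real.sqrt_sq hk.le]

lemma hasDerivAt_theta (ha : |a| < k) :
    HasDerivAt (fun x => Real.arccos (a / x)) (a / (k * Real.sqrt (k ^ 2 - a ^ 2))) k := by
  have hk := hk0 a k ha
  have hr := hratio a k ha
  have h1 : a / k ≠ -1 := by intro h; rw [h] at hr; simp at hr
  have h2 : a / k ≠ 1 := by intro h; rw [h] at hr; simp at hr
  have hin : HasDerivAt (fun x : ℝ => a / x) (-(a / k ^ 2)) k := by
    simpa [div_eq_mul_inv, pow_two] using (hasDerivAt_inv hk.ne').const_mul a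
  have := (Real.hasDerivAt_arccos h1 h2).comp k hin
  refine this.congr_deriv ?_
  rw [hsqrt_ratio a k ha]
  have hs := hs0 a k ha
  field_simp

lemma hasDerivAt_s (ha : |a| < k) :
    HasDerivAt (fun x => Real.sqrt (x ^ 2 - a ^ 2)) (k / Real.sqrt (k ^ 2 - a ^ 2)) k := by
  have hin : HasDerivAt (fun x : ℝ => x ^ 2 - a ^ 2) (2 * k) k := by
    simpa using (hasDerivAt_pow 2 k).sub_const (a ^ 2)
  have := (Real.hasDerivAt_sqrt (hsq2 a k ha).ne').comp k hin
  refine this.congr_deriv ?_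
  have hs := hs0 a k ha
  field_simp

lemma hasDerivAt_g (ha : |a| < k) :
    HasDerivAt (fun x => Real.arccos (a / x) / Real.sqrt (x ^ 2 - a ^ 2))
      ((a / k - Real.arccos (a / k) * k / Real.sqrt (k ^ 2 - a ^ 2)) /
        Real.sqrt (k ^ 2 - a ^ 2) ^ 2) k := by
  have hs := hs0 a k ha
  have hk := hk0 a k ha
  have := (hasDerivAt_theta a k ha).div (hasDerivAt_s a k ha) hs.ne'
  refine this.congr_deriv ?_
  field_simp

lemma hasDerivAt_G1 (ha : |a| < k) :
    HasDerivAt (fun x => (a / x - Real.arccos (a / x) * x / Real.sqrt (x ^ 2 - a ^ 2)) /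
        Real.sqrt (x ^ 2 - a ^ 2) ^ 2)
      ((Real.arccos (a / k) * (3 * k ^ 2 - Real.sqrt (k ^ 2 - a ^ 2) ^ 2) / Real.sqrt (k ^ 2 - a ^ 2)
        - 3 * a - a * Real.sqrt (k ^ 2 - a ^ 2) ^ 2 / k ^ 2) / Real.sqrt (k ^ 2 - a ^ 2) ^ 4) k := by
  have hs := hs0 a k ha
  have hk := hk0 a k ha
  have hθ := hasDerivAt_theta a k ha
  have hS := hasDerivAt_s a k ha
  have hinv : HasDerivAt (fun x : ℝ => a / x) (-(a / k ^ 2)) k := by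
    simpa [div_eq_mul_inv, pow_two] using (hasDerivAt_inv hk.ne').const_mul a
  have hks : HasDerivAt (fun x => x / Real.sqrt (x ^ 2 - a ^ 2))
      ((1 * Real.sqrt (k ^ 2 - a ^ 2) - k * (k / Real.sqrt (k ^ 2 - a ^ 2))) /
        Real.sqrt (k ^ 2 - a ^ 2) ^ 2) k := (hasDerivAt_id k).div hS hs.ne'
  have hnum : HasDerivAt (fun x => a / x - Real.arccos (a / x) * x / Real.sqrt (x ^ 2 - a ^ 2))
      (-(a / k ^ 2) - (a / (k * Real.sqrt (k ^ 2 - a ^ 2)) * (k / Real.sqrt (k ^ 2 - a ^ 2))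
        + Real.arccos (a / k) * ((1 * Real.sqrt (k ^ 2 - a ^ 2) - k * (k / Real.sqrt (k ^ 2 - a ^ 2))) /
          Real.sqrt (k ^ 2 - a ^ 2) ^ 2))) k := by
    have := hθ.mul hks
    have h2 : HasDerivAt (fun x => Real.arccos (a / x) * (x / Real.sqrt (x ^ 2 - a ^ 2)))
        (a / (k * Real.sqrt (k ^ 2 - a ^ 2)) * (k / Real.sqrt (k ^ 2 - a ^ 2))
          + Real.arccos (a / k) * ((1 * Real.sqrt (k ^ 2 - a ^ 2) - k * (k / Real.sqrt (k ^ 2 - a ^ 2))) /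
            Real.sqrt (k ^ 2 - a ^ 2) ^ 2)) k := hθ.mul hks
    have h3 := hinv.sub h2
    refine h3.congr_of_eventuallyEq (Filter.Eventually.of_forall fun x => ?_)
    · simp only [Pi.sub_apply]; ring
  have hden : HasDerivAt (fun x => Real.sqrt (x ^ 2 - a ^ 2) ^ 2)
      (2 * Real.sqrt (k ^ 2 - a ^ 2) ^ 1 * (k / Real.sqrt (k ^ 2 - a ^ 2))) k := hS.pow 2
  have := hnum.div hden (by positivity)
  refine this.congr_deriv ?_
  field_simp
  ring
section
variable (a k : ℝ)

lemma hcos_sin (ha : |a| < k) :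
    Real.cos (Real.arccos (a / k)) = a / k ∧
    Real.sin (Real.arccos (a / k)) = Real.sqrt (k ^ 2 - a ^ 2) / k := by
  have hr := hratio a k ha
  have hb := abs_lt.1 hr
  exact ⟨Real.cos_arccos hb.1.le hb.2.le,
    by rw [Real.sin_arccos, hsqrt_ratio a k ha]⟩

lemma G1_neg (ha : |a| < k) :
    (a / k - Real.arccos (a / k) * k / Real.sqrt (k ^ 2 - a ^ 2)) /
      Real.sqrt (k ^ 2 - a ^ 2) ^ 2 < 0 := by
  have hs := hs0 a k ha
  have hk := hk0 a k ha
  obtain ⟨hcos, hsin⟩ := hcos_sin a k ha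
  set θ := Real.arccos (a / k) with hθ
  set s := Real.sqrt (k ^ 2 - a ^ 2) with hsdef
  have hθ0 : 0 < θ := Real.arccos_pos.2 (abs_lt.1 (hratio a k ha)).2
  have hθπ : θ ≤ π := Real.arccos_le_pi _
  have hcs := cossinlt θ hθ0 hθπ
  rw [hcos, hsin] at hcs
  apply div_neg_of_neg_of_pos _ (by positivity)
  have h1 : a * s < θ * k ^ 2 := by
    have h := mul_lt_mul_of_pos_right hcs (by positivity : (0:ℝ) < k ^ 2)
    have e1 : a / k * (s / k) * k ^ 2 = a * s := by field_simp [hk.ne']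
    rwa [e1] at h
  have heq : a / k - θ * k / s = (a * s - θ * k ^ 2) / (k * s) := by field_simp
  rw [heq]
  exact div_neg_of_neg_of_pos (by linarith) (by positivity)

lemma G2_nonneg (ha : |a| < k) :
    0 ≤ (Real.arccos (a / k) * (3 * k ^ 2 - Real.sqrt (k ^ 2 - a ^ 2) ^ 2) / Real.sqrt (k ^ 2 - a ^ 2)
        - 3 * a - a * Real.sqrt (k ^ 2 - a ^ 2) ^ 2 / k ^ 2) / Real.sqrt (k ^ 2 - a ^ 2) ^ 4 := by
  have hs := hs0 a k ha
  have hk := hk0 a k ha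
  obtain ⟨hcos, hsin⟩ := hcos_sin a k ha
  set θ := Real.arccos (a / k) with hθ
  set s := Real.sqrt (k ^ 2 - a ^ 2) with hsdef
  have hsq : s ^ 2 = k ^ 2 - a ^ 2 := Real.sq_sqrt (hsq2 a k ha).le
  have hθ0 : 0 ≤ θ := Real.arccos_nonneg _
  have hθπ : θ ≤ π := Real.arccos_le_pi _
  have key := keyineq θ hθ0 hθπ
  rw [hcos, hsin] at key
  have key2 : a * s * (3 * k ^ 2 + s ^ 2) ≤ θ * (2 * k ^ 4 + a ^ 2 * k ^ 2) := by
    have h := mul_le_mul_of_nonneg_right key (by positivity : (0:ℝ) ≤ k ^ 4)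
    have e1 : a / k * (s / k) * (3 + (s / k) ^ 2) * k ^ 4 = a * s * (3 * k ^ 2 + s ^ 2) := by
      field_simp [hk.ne']
    have e2 : θ * (2 + (a / k) ^ 2) * k ^ 4 = θ * (2 * k ^ 4 + a ^ 2 * k ^ 2) := by
      field_simp [hk.ne']
    rwa [e1, e2] at h
  apply div_nonneg _ (by positivity)
  have h3 : 3 * k ^ 2 - s ^ 2 = 2 * k ^ 2 + a ^ 2 := by rw [hsq]; ring
  rw [h3]
  have hN : 0 ≤ θ * (2 * k ^ 2 + a ^ 2) * k ^ 2 - 3 * a * s * k ^ 2 - a * s ^ 3 := by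
    nlinarith [key2]
  have heq : θ * (2 * k ^ 2 + a ^ 2) / s - 3 * a - a * s ^ 2 / k ^ 2 =
      (θ * (2 * k ^ 2 + a ^ 2) * k ^ 2 - 3 * a * s * k ^ 2 - a * s ^ 3) / (s * k ^ 2) := by
    field_simp
  rw [heq]
  exact div_nonneg hN (by positivity)
end

section
variable (a : ℝ)

noncomputable def gfun (a : ℝ) : ℝ → ℝ :=
  fun x => Real.arccos (a / x) / Real.sqrt (x ^ 2 - a ^ 2)

lemma g_strictAnti : StrictAntiOn (gfun a) (Set.Ioi |a|) := by
  apply strictAntiOn_of_hasDerivWithinAt_neg (convex_Ioi |a|)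
    (f' := fun k => (a / k - Real.arccos (a / k) * k / Real.sqrt (k ^ 2 - a ^ 2)) /
        Real.sqrt (k ^ 2 - a ^ 2) ^ 2)
  · exact fun x hx => (hasDerivAt_g a x hx).continuousAt.continuousWithinAt
  · intro x hx
    rw [interior_Ioi] at hx
    exact (hasDerivAt_g a x hx).hasDerivWithinAt
  · intro x hx
    rw [interior_Ioi] at hx
    exact G1_neg a x hx

lemma g_convex : ConvexOn ℝ (Set.Ioi |a|) (gfun a) := by
  apply convexOn_of_hasDerivWithinAt2_nonneg (convex_Ioi |a|)
    (f' := fun k => (a / k - Real.arccos (a / k) * k / Real.sqrt (k ^ 2 - a ^ 2)) /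
        Real.sqrt (k ^ 2 - a ^ 2) ^ 2)
    (f'' := fun k => (Real.arccos (a / k) * (3 * k ^ 2 - Real.sqrt (k ^ 2 - a ^ 2) ^ 2) /
        Real.sqrt (k ^ 2 - a ^ 2) - 3 * a - a * Real.sqrt (k ^ 2 - a ^ 2) ^ 2 / k ^ 2) /
        Real.sqrt (k ^ 2 - a ^ 2) ^ 4)
  · exact fun x hx => (hasDerivAt_g a x hx).continuousAt.continuousWithinAt
  · intro x hx
    rw [interior_Ioi] at hx
    exact (hasDerivAt_g a x hx).hasDerivWithinAt
  · intro x hx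
    rw [interior_Ioi] at hx
    exact (hasDerivAt_G1 a x hx).hasDerivWithinAt
  · intro x hx
    rw [interior_Ioi] at hx
    exact G2_nonneg a x hx
end

theorem stmt3 (a : ℝ) (ku : ℝ → ℝ)
    (hku : ∀ T : ℝ, 0 < T → a * T < 1 →
      |a| < ku T ∧ T * Real.sqrt ((ku T) ^ 2 - a ^ 2) = Real.arccos (a / ku T)) :
    StrictAntiOn ku {T : ℝ | 0 < T ∧ a * T < 1} ∧
    ConvexOn ℝ {T : ℝ | 0 < T ∧ a * T < 1} ku := by
  set D : Set ℝ := {T : ℝ | 0 < T ∧ a * T < 1} with hD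
  have hDconv : Convex ℝ D := by
    have : D = Set.Ioi 0 ∩ {T : ℝ | a * T < 1} := by
      ext T; simp [hD, Set.mem_Ioi]
    rw [this]
    exact (convex_Ioi 0).inter
      (convex_halfSpace_lt ⟨fun x y => mul_add a x y, fun c x => by simp [smul_eq_mul]; ring⟩ 1)
  have hmem : ∀ T ∈ D, ku T ∈ Set.Ioi |a| := fun T hT => (hku T hT.1 hT.2).1
  have hgT : ∀ T ∈ D, gfun a (ku T) = T := by
    intro T hT
    have h := hku T hT.1 hT.2
    have hs := hs0 a (ku T) h.1
    rw [gfun, ← h.2]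
    field_simp
  have hanti := g_strictAnti a
  constructor
  · intro T1 h1 T2 h2 hlt
    by_contra hcon
    push_neg at hcon
    rcases eq_or_lt_of_le hcon with heq | hl
    · have : T1 = T2 := by rw [← hgT T1 h1, ← hgT T2 h2, heq]
      exact absurd this (ne_of_lt hlt)
    · have := hanti (hmem T1 h1) (hmem T2 h2) hl
      rw [hgT T1 h1, hgT T2 h2] at this
      linarith
  · refine ⟨hDconv, ?_⟩
    intro x hx y hy α β hα hβ hαβ
    have hX := hmem x hx
    have hY := hmem y hy
    have hT : α • x + β • y ∈ D := hDconv hx hy hα hβ hαβ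
    have hK : α • ku x + β • ku y ∈ Set.Ioi |a| := (convex_Ioi |a|) hX hY hα hβ hαβ
    have hconv := (g_convex a).2 hX hY hα hβ hαβ
    rw [hgT x hx, hgT y hy] at hconv
    have hgTT : gfun a (ku (α • x + β • y)) = α • x + β • y := hgT _ hT
    by_contra hcon
    push_neg at hcon
    have hlt : α • ku x + β • ku y < ku (α • x + β • y) := hcon
    have := hanti hK (hmem _ hT) hlt
    rw [hgTT] at this
    linarith
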